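/- arXiv:1511.06891 — 2 statements merged into one kernel-verified Lean document; each statement's English description precedes it below -/
import Mathlib

section
/- Let F : Finset V → ℝ be nonnegative, nondecreasing (F(A) ≤ F(A') whenever A ⊆ A'), ε-submodular, and F(∅) = 0. Let X* be any set of size N maximizing F among N-subsets, and let X^N be the set obtained by N steps of greedy selection (each step adding an element maximizing the marginal gain of F). Then F(X^N) ≥ (1 - 1/e)(F(X*) - Nε). -/
/-- `ε`-submodularity of a set function on subsets of a finite type. -/
def EpsSubmodular {V : Type*} [Fintype V] [DecidableEq V]
    (F : Finset V → ℝ) (ε : ℝ) : Prop :=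
  ∀ A A' : Finset V, A ⊆ A' → ∀ a : V, a ∉ A' →
    F (insert a A') - F A' ≤ F (insert a A) - F A + ε

/-- Telescoping bound: the value of a union is bounded by the sum of marginal gains
plus `ε` per element. -/
lemma eps_submodular_union_le {V : Type*} [Fintype V] [DecidableEq V]
    (F : Finset V → ℝ) (ε : ℝ) (hsub : EpsSubmodular F ε) (S T : Finset V) :
    F (S ∪ T) ≤ F T + ∑ a ∈ S \ T, (F (insert a T) - F T + ε) := by
  classical
  induction S using Finset.induction_on with
  | empty => simp
  | @insert a S ha ih =>
    by_cases haT : a ∈ T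
    · rw [Finset.insert_union, Finset.insert_eq_self.mpr (Finset.mem_union_right S haT),
        Finset.insert_sdiff_of_mem _ haT]
      exact ih
    · rw [Finset.insert_union, Finset.insert_sdiff_of_notMem _ haT,
        Finset.sum_insert (by simp [ha])]
      have haST : a ∉ S ∪ T := by simp [ha, haT]
      have h := hsub T (S ∪ T) Finset.subset_union_right a haST
      linarith

/-- Performance guarantee of greedy selection for a nonnegative, nondecreasing,
`ε`-submodular set function `F` with `F ∅ = 0`: after `N` greedy steps,
`F(X^N) ≥ (1 - 1/e)(F(X*) - N ε)` where `X*` is an optimal `N`-subset. -/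
theorem greedy_near_optimal {V : Type*} [Fintype V] [DecidableEq V]
    (N : ℕ) (hN : 1 ≤ N) (hNcard : N ≤ Fintype.card V)
    (F : Finset V → ℝ) (ε : ℝ)
    (hnonneg : ∀ A : Finset V, 0 ≤ F A)
    (hmono : ∀ A A' : Finset V, A ⊆ A' → F A ≤ F A')
    (hsub : EpsSubmodular F ε)
    (hempty : F ∅ = 0)
    (Xstar : Finset V) (hXstarCard : Xstar.card = N)
    (hopt : ∀ S : Finset V, S.card = N → F S ≤ F Xstar)
    (X : ℕ → Finset V) (hX0 : X 0 = ∅)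
    (hgreedy : ∀ k, k < N → ∃ a : V, a ∉ X k ∧ X (k + 1) = insert a (X k) ∧
      ∀ b : V, b ∉ X k →
        F (insert b (X k)) - F (X k) ≤ F (insert a (X k)) - F (X k)) :
    (1 - 1 / Real.exp 1) * (F Xstar - (N : ℝ) * ε) ≤ F (X N) := by
  classical
  have hNr : (1 : ℝ) ≤ (N : ℝ) := by exact_mod_cast hN
  have hNpos : (0 : ℝ) < (N : ℝ) := by linarith
  have hVne : Nonempty V := by
    have : 0 < Fintype.card V := lt_of_lt_of_le hN hNcard
    exact Fintype.card_pos_iff.mp this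
  obtain ⟨a0⟩ := hVne
  have hε : 0 ≤ ε := by
    have := hsub ∅ ∅ (subset_refl _) a0 (Finset.notMem_empty a0)
    linarith
  set c : ℝ := 1 - 1 / (N : ℝ) with hc
  have hc0 : 0 ≤ c := by
    have : 1 / (N : ℝ) ≤ 1 := by
      rw [div_le_one hNpos]; exact hNr
    simp only [hc]; linarith
  have hc1 : c ≤ 1 := by
    have : 0 < 1 / (N : ℝ) := by positivity
    simp only [hc]; linarith
  have heps : (1 - c) * (N : ℝ) * ε = ε := by
    have hNne : (N : ℝ) ≠ 0 := ne_of_gt hNpos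
    rw [hc, sub_sub_cancel, one_div, inv_mul_cancel₀ hNne, one_mul]
  -- key per-step inequality
  have key : ∀ k, k < N →
      F Xstar - F (X k) ≤ (N : ℝ) * ((F (X (k + 1)) - F (X k)) + ε) := by
    intro k hk
    obtain ⟨a, ha, hins, hmax⟩ := hgreedy k hk
    have h1 : F Xstar ≤ F (Xstar ∪ X k) := hmono _ _ Finset.subset_union_left
    have h2 := eps_submodular_union_le F ε hsub Xstar (X k)
    have hg : 0 ≤ F (X (k + 1)) - F (X k) := by
      rw [hins]
      have := hmono (X k) (insert a (X k)) (Finset.subset_insert a (X k))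
      linarith
    have h3 : ∑ b ∈ Xstar \ X k, (F (insert b (X k)) - F (X k) + ε)
        ≤ ((Xstar \ X k).card : ℝ) * ((F (X (k + 1)) - F (X k)) + ε) := by
      have := Finset.sum_le_card_nsmul (Xstar \ X k)
        (fun b => F (insert b (X k)) - F (X k) + ε)
        ((F (X (k + 1)) - F (X k)) + ε)
        (by
          intro b hb
          have hbk : b ∉ X k := (Finset.mem_sdiff.mp hb).2
          have h := hmax b hbk
          show F (insert b (X k)) - F (X k) + ε ≤ F (X (k + 1)) - F (X k) + ε
          rw [hins]
          linarith)
      simpa only [nsmul_eq_mul] using this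
    have hcard : ((Xstar \ X k).card : ℝ) ≤ (N : ℝ) := by
      have : (Xstar \ X k).card ≤ Xstar.card :=
        Finset.card_le_card (Finset.sdiff_subset)
      exact_mod_cast le_trans this (le_of_eq hXstarCard)
    have h4 : ((Xstar \ X k).card : ℝ) * ((F (X (k + 1)) - F (X k)) + ε)
        ≤ (N : ℝ) * ((F (X (k + 1)) - F (X k)) + ε) :=
      mul_le_mul_of_nonneg_right hcard (by linarith)
    linarith
  -- main geometric induction
  have main : ∀ k, k ≤ N →
      F Xstar - F (X k) ≤ c ^ k * F Xstar + (1 - c ^ k) * ((N : ℝ) * ε) := by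
    intro k
    induction k with
    | zero =>
      intro _
      simp [hX0, hempty]
    | succ k ih =>
      intro hk1
      have hk : k < N := hk1
      have ihk := ih (le_of_lt hk)
      have hkey := key k hk
      have step : F Xstar - F (X (k + 1)) ≤ c * (F Xstar - F (X k)) + ε := by
        have h2 : (F Xstar - F (X k)) / (N : ℝ)
            ≤ (F (X (k + 1)) - F (X k)) + ε := by
          rw [div_le_iff₀ hNpos]
          linarith
        have h3 : (F Xstar - F (X k)) / (N : ℝ)
            = (1 / (N : ℝ)) * (F Xstar - F (X k)) := by ring
        simp only [hc]
        nlinarith [h2, h3]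
      have homul := mul_le_mul_of_nonneg_left ihk hc0
      rw [pow_succ]
      nlinarith [homul, heps, step]
  have hmain := main N le_rfl
  -- bound c^N by 1/e
  have hqe : c ^ N ≤ 1 / Real.exp 1 := by
    have h1 : c ≤ Real.exp (-(1 / (N : ℝ))) := by
      have := Real.add_one_le_exp (-(1 / (N : ℝ)))
      simp only [hc]; linarith
    have h2 : c ^ N ≤ Real.exp (-(1 / (N : ℝ))) ^ N :=
      pow_le_pow_left₀ hc0 h1 N
    have h3 : Real.exp (-(1 / (N : ℝ))) ^ N = Real.exp ((N : ℝ) * (-(1 / (N : ℝ)))) :=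
      (Real.exp_nat_mul _ N).symm
    have h4 : (N : ℝ) * (-(1 / (N : ℝ))) = -1 := by
      field_simp
    rw [h3, h4] at h2
    rw [Real.exp_neg] at h2
    rw [one_div]
    exact h2
  have hFs : 0 ≤ F Xstar := hnonneg _
  have hepos : 0 < Real.exp 1 := Real.exp_pos 1
  have he1 : 1 ≤ Real.exp 1 := by
    have := Real.add_one_le_exp 1; linarith [Real.add_one_le_exp (1 : ℝ)]
  have hinv1 : 1 / Real.exp 1 ≤ 1 := by
    rw [div_le_one hepos]; exact he1
  by_cases hD : 0 ≤ F Xstar - (N : ℝ) * ε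
  · have h5 : (1 - 1 / Real.exp 1) ≤ (1 - c ^ N) := by linarith
    have h6 : (1 - 1 / Real.exp 1) * (F Xstar - (N : ℝ) * ε)
        ≤ (1 - c ^ N) * (F Xstar - (N : ℝ) * ε) :=
      mul_le_mul_of_nonneg_right h5 hD
    nlinarith [hmain]
  · push_neg at hD
    have h6 : (1 - 1 / Real.exp 1) * (F Xstar - (N : ℝ) * ε) ≤ 0 := by
      apply mul_nonpos_of_nonneg_of_nonpos
      · linarith
      · linarith
    linarith [hnonneg (X N)]
end

section
/- Let N ≥ 1, σ_s² > 0, σ_n² > 0, ε₁ > 0, and 0 < q < min(σ_n²/(2N σ_s²), (1/(4σ_s²))(√(ε₁² + 4ε₁σ_n²/N) - ε₁)). Then 4N σ_s⁴ q² / (σ_n² - 2N σ_s² q) ≤ ε₁ and σ_n² - 2N σ_s² q > 0. -/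
/-- Algebraic core of Lemma 3: if
`0 < q < min(σ_n²/(2Nσ_s²), (1/(4σ_s²))(√(ε₁² + 4ε₁σ_n²/N) - ε₁))`, then
`4Nσ_s⁴q²/(σ_n² - 2Nσ_s²q) ≤ ε₁` and `σ_n² - 2Nσ_s²q > 0`. -/
theorem variance_reduction_spread_bound (N : ℕ) (hN : 1 ≤ N)
    (σssq σnsq ε₁ q : ℝ) (hσs : 0 < σssq) (hσn : 0 < σnsq) (hε₁ : 0 < ε₁)
    (hq : 0 < q)
    (hqlt : q < min (σnsq / (2 * (N : ℝ) * σssq))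
      ((1 / (4 * σssq)) *
        (Real.sqrt (ε₁ ^ 2 + 4 * ε₁ * σnsq / (N : ℝ)) - ε₁))) :
    4 * (N : ℝ) * σssq ^ 2 * q ^ 2 / (σnsq - 2 * (N : ℝ) * σssq * q) ≤ ε₁ ∧
    0 < σnsq - 2 * (N : ℝ) * σssq * q := by
  have hN' : (0:ℝ) < N := by exact_mod_cast Nat.lt_of_lt_of_le Nat.zero_lt_one hN
  obtain ⟨h1, h2⟩ := lt_min_iff.mp hqlt
  have hD : 0 < σnsq - 2 * (N : ℝ) * σssq * q := by
    rw [lt_div_iff₀ (by positivity)] at h1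
    nlinarith
  have harg : 0 ≤ ε₁ ^ 2 + 4 * ε₁ * σnsq / (N : ℝ) := by positivity
  have hs : Real.sqrt (ε₁ ^ 2 + 4 * ε₁ * σnsq / (N : ℝ)) ^ 2
      = ε₁ ^ 2 + 4 * ε₁ * σnsq / (N : ℝ) := Real.sq_sqrt harg
  have h3 : 4 * σssq * q + ε₁ < Real.sqrt (ε₁ ^ 2 + 4 * ε₁ * σnsq / (N : ℝ)) := by
    have h2' : 4 * σssq * q < Real.sqrt (ε₁ ^ 2 + 4 * ε₁ * σnsq / (N : ℝ)) - ε₁ := by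
      have := (mul_lt_mul_iff_right₀ (show (0:ℝ) < 4 * σssq by positivity)).mpr h2
      calc 4 * σssq * q < 4 * σssq * ((1 / (4 * σssq)) *
          (Real.sqrt (ε₁ ^ 2 + 4 * ε₁ * σnsq / (N : ℝ)) - ε₁)) := this
        _ = Real.sqrt (ε₁ ^ 2 + 4 * ε₁ * σnsq / (N : ℝ)) - ε₁ := by
            field_simp
    linarith
  have hsq : (4 * σssq * q + ε₁) ^ 2 < ε₁ ^ 2 + 4 * ε₁ * σnsq / (N : ℝ) := by
    calc (4 * σssq * q + ε₁) ^ 2 < Real.sqrt (ε₁ ^ 2 + 4 * ε₁ * σnsq / (N : ℝ)) ^ 2 :=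
          pow_lt_pow_left₀ h3 (by positivity) two_ne_zero
      _ = _ := hs
  have hdiv : (4 * ε₁ * σnsq / (N : ℝ)) * (N : ℝ) = 4 * ε₁ * σnsq := by
    field_simp
  have hkey : 4 * (N : ℝ) * σssq ^ 2 * q ^ 2 ≤ ε₁ * (σnsq - 2 * (N : ℝ) * σssq * q) := by
    nlinarith [mul_lt_mul_of_pos_right hsq hN']
  refine ⟨(div_le_iff₀ hD).mpr ?_, hD⟩
  linarith
end
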